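/- There exist a two-qubit state and projective measurements achieving the value 2 + √2 for the Bell expression P(a_1=b_1)+P(a_1=b_2)+P(a_2=b_1)+P(a_2≠b_2), and no quantum strategy exceeds 2 + √2 (this is the CHSH probability form of Tsirelson's bound). -/

import Mathlib

open Matrix
open scoped ComplexOrder Kronecker

/-- Kronecker product of square matrices. -/
noncomputable def kron {m n : ℕ} (A : Matrix (Fin m) (Fin m) ℂ)
    (B : Matrix (Fin n) (Fin n) ℂ) : Matrix (Fin m × Fin n) (Fin m × Fin n) ℂ :=
  fun p q => A p.1 q.1 * B p.2 q.2

/-- An orthogonal projection (projective measurement effect). -/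
def IsProjection {m : ℕ} (P : Matrix (Fin m) (Fin m) ℂ) : Prop :=
  P.IsHermitian ∧ P * P = P

/-- The Bell expression `P(a₁=b₁) + P(a₁=b₂) + P(a₂=b₁) + P(a₂≠b₂)` for the quantum
strategy given by state `ρ` and projective measurements `{A x, 1 − A x}`,
`{B y, 1 − B y}`; `P(a,b|x,y) = Tr[ρ (A_a^x ⊗ B_b^y)]`. -/
noncomputable def bellExpr {m n : ℕ} (ρ : Matrix (Fin m × Fin n) (Fin m × Fin n) ℂ)
    (A : Fin 2 → Matrix (Fin m) (Fin m) ℂ) (B : Fin 2 → Matrix (Fin n) (Fin n) ℂ) : ℝ :=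
  (Matrix.trace (ρ * (kron (A 0) (B 0) + kron (1 - A 0) (1 - B 0)))).re
  + (Matrix.trace (ρ * (kron (A 0) (B 1) + kron (1 - A 0) (1 - B 1)))).re
  + (Matrix.trace (ρ * (kron (A 1) (B 0) + kron (1 - A 1) (1 - B 0)))).re
  + (Matrix.trace (ρ * (kron (A 1) (1 - B 1) + kron (1 - A 1) (B 1)))).re

/-- Tsirelson's bound in CHSH probability form: there exist a two-qubit state and
projective measurements achieving the value `2 + √2` for the Bell expression
`P(a₁=b₁) + P(a₁=b₂) + P(a₂=b₁) + P(a₂≠b₂)`, and no quantum strategy (any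
finite-dimensional state and projective measurements) exceeds `2 + √2`. -/
lemma kron_eq_kronecker {m n : ℕ} (A : Matrix (Fin m) (Fin m) ℂ) (B : Matrix (Fin n) (Fin n) ℂ) :
    kron A B = A ⊗ₖ B := rfl

lemma kron_mul {m n : ℕ} (A A' : Matrix (Fin m) (Fin m) ℂ) (B B' : Matrix (Fin n) (Fin n) ℂ) :
    kron A B * kron A' B' = kron (A * A') (B * B') := by
  simp [kron_eq_kronecker, Matrix.mul_kronecker_mul]

lemma kron_one_one {m n : ℕ} : kron (1 : Matrix (Fin m) (Fin m) ℂ) (1 : Matrix (Fin n) (Fin n) ℂ) = 1 := by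
  simp [kron_eq_kronecker, Matrix.one_kronecker_one]

lemma kron_split {m n : ℕ} (A : Matrix (Fin m) (Fin m) ℂ) (B : Matrix (Fin n) (Fin n) ℂ) :
    kron A B = kron A 1 * kron 1 B := by
  simp [kron_mul]

lemma kron_sub_one_left {m n : ℕ} (A : Matrix (Fin m) (Fin m) ℂ) :
    kron (1 - A) (1 : Matrix (Fin n) (Fin n) ℂ) = 1 - kron A 1 := by
  ext p q
  simp [kron, Matrix.sub_apply, Matrix.one_apply, Prod.ext_iff]
  by_cases h1 : p.1 = q.1 <;> by_cases h2 : p.2 = q.2 <;> simp [h1, h2]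

lemma kron_sub_one_right {m n : ℕ} (B : Matrix (Fin n) (Fin n) ℂ) :
    kron (1 : Matrix (Fin m) (Fin m) ℂ) (1 - B) = 1 - kron 1 B := by
  ext p q
  simp [kron, Matrix.sub_apply, Matrix.one_apply, Prod.ext_iff]
  by_cases h1 : p.1 = q.1 <;> by_cases h2 : p.2 = q.2 <;> simp [h1, h2]

lemma kron_conjTranspose {m n : ℕ} (A : Matrix (Fin m) (Fin m) ℂ) (B : Matrix (Fin n) (Fin n) ℂ) :
    (kron A B)ᴴ = kron Aᴴ Bᴴ := by
  ext p q
  simp [kron, Matrix.conjTranspose_apply, mul_comm]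

noncomputable def Pm {m n : ℕ} (A : Fin 2 → Matrix (Fin m) (Fin m) ℂ)
    (B : Fin 2 → Matrix (Fin n) (Fin n) ℂ) : Matrix (Fin m × Fin n) (Fin m × Fin n) ℂ :=
  ((Real.sqrt 2 : ℝ) : ℂ) • ((2:ℂ) • kron (A 0) 1 - 1)
    - ((2:ℂ) • (kron 1 (B 0) + kron 1 (B 1)) - (2:ℂ) • 1)

noncomputable def Qm {m n : ℕ} (A : Fin 2 → Matrix (Fin m) (Fin m) ℂ)
    (B : Fin 2 → Matrix (Fin n) (Fin n) ℂ) : Matrix (Fin m × Fin n) (Fin m × Fin n) ℂ :=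
  ((Real.sqrt 2 : ℝ) : ℂ) • ((2:ℂ) • kron (A 1) 1 - 1)
    - (2:ℂ) • (kron 1 (B 0) - kron 1 (B 1))

lemma ring_identity {R : Type*} [Ring R] (c u0 u1 v0 v1 : R)
    (hc : c * c = 2)
    (hcc : ∀ x : R, x * c = c * x)
    (hu0 : u0 * u0 = u0) (hu1 : u1 * u1 = u1)
    (hv0 : v0 * v0 = v0) (hv1 : v1 * v1 = v1)
    (h00 : v0 * u0 = u0 * v0) (h01 : v1 * u0 = u0 * v1)
    (h10 : v0 * u1 = u1 * v0) (h11 : v1 * u1 = u1 * v1) :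
    4 * c * (u0*v0 + (1-u0)*(1-v0) + (u0*v1 + (1-u0)*(1-v1)) + (u1*v0 + (1-u1)*(1-v0))
      + (u1*(1-v1) + (1-u1)*v1))
    + ((c*(2*u0-1) - (2*(v0+v1) - 2)) * (c*(2*u0-1) - (2*(v0+v1) - 2))
    +  (c*(2*u1-1) - 2*(v0-v1)) * (c*(2*u1-1) - 2*(v0-v1)))
    = 8 + 8*c := by
  have hcc' : ∀ x y : R, x * (c * y) = c * (x * y) := by
    intro x y; rw [← mul_assoc, hcc, mul_assoc]
  have hc' : ∀ x : R, c * (c * x) = 2 * x := by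
    intro x; rw [← mul_assoc, hc]
  simp only [mul_sub, sub_mul, mul_add, add_mul, mul_one, one_mul, mul_assoc, hcc, hcc', hc, hc',
    hu0, hu1, hv0, hv1, h00, h01, h10, h11]
  noncomm_ring
  simp only [hu0, hu1, hv0, hv1, h00, h01, h10, h11]
  norm_num
  abel

set_option maxHeartbeats 1000000 in
lemma bell_op_identity {m n : ℕ} (A : Fin 2 → Matrix (Fin m) (Fin m) ℂ)
    (B : Fin 2 → Matrix (Fin n) (Fin n) ℂ)
    (hA : ∀ x, A x * A x = A x) (hB : ∀ y, B y * B y = B y) :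
    (4 * ((Real.sqrt 2 : ℝ) : ℂ)) •
      ((kron (A 0) (B 0) + kron (1 - A 0) (1 - B 0))
       + (kron (A 0) (B 1) + kron (1 - A 0) (1 - B 1))
       + (kron (A 1) (B 0) + kron (1 - A 1) (1 - B 0))
       + (kron (A 1) (1 - B 1) + kron (1 - A 1) (B 1)))
    + (Pm A B * Pm A B + Qm A B * Qm A B)
    = ((8 : ℂ) + 8 * ((Real.sqrt 2 : ℝ) : ℂ)) • 1 := by
  set M := Matrix (Fin m × Fin n) (Fin m × Fin n) ℂ
  set c : ℂ := ((Real.sqrt 2 : ℝ) : ℂ) with hcdef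
  set u0 : M := kron (A 0) 1
  set u1 : M := kron (A 1) 1
  set v0 : M := kron 1 (B 0)
  set v1 : M := kron 1 (B 1)
  have hsplit : ∀ x y, kron (A x) (B y) = (kron (A x) 1) * (kron 1 (B y)) := fun x y => kron_split _ _
  have hcompl : ∀ x y, kron (1 - A x) (1 - B y)
      = (1 - kron (A x) 1) * (1 - kron 1 (B y)) := by
    intro x y
    rw [kron_split, kron_sub_one_left, kron_sub_one_right]
  have hmix1 : ∀ x y, kron (A x) (1 - B y) = (kron (A x) 1) * (1 - kron 1 (B y)) := by
    intro x y; rw [kron_split, kron_sub_one_right]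
  have hmix2 : ∀ x y, kron (1 - A x) (B y) = (1 - kron (A x) 1) * (kron 1 (B y)) := by
    intro x y; rw [kron_split, kron_sub_one_left]
  -- scalar matrix
  have hC : ∀ (z : ℂ) (X : M), z • X = (algebraMap ℂ M z) * X := fun z X => (Algebra.smul_def z X)
  have key := ring_identity (R := M) (algebraMap ℂ M c) u0 u1 v0 v1
    (by rw [← _root_.map_mul]
        have : c * c = 2 := by
          rw [hcdef, ← Complex.ofReal_mul, Real.mul_self_sqrt (by norm_num)]; norm_num
        rw [this, map_ofNat])
    (fun x => (Algebra.commutes c x).symm)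
    (by rw [kron_mul, hA 0, one_mul]) (by rw [kron_mul, hA 1, one_mul])
    (by rw [kron_mul, hB 0, one_mul]) (by rw [kron_mul, hB 1, one_mul])
    (by rw [kron_mul, kron_mul, one_mul, mul_one, one_mul, mul_one])
    (by rw [kron_mul, kron_mul, one_mul, mul_one, one_mul, mul_one])
    (by rw [kron_mul, kron_mul, one_mul, mul_one, one_mul, mul_one])
    (by rw [kron_mul, kron_mul, one_mul, mul_one, one_mul, mul_one])
  rw [hsplit, hsplit, hsplit, hcompl, hcompl, hcompl, hmix1, hmix2]
  have h2X : ∀ X : M, (2:ℂ) • X = 2 * X := by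
    intro X; rw [hC, map_ofNat]
  have hPm : Pm A B = (algebraMap ℂ M c)*(2*u0-1) - (2*(v0+v1) - 2) := by
    rw [Pm, ← hC, h2X, h2X, h2X, mul_one]
  have hQm : Qm A B = (algebraMap ℂ M c)*(2*u1-1) - 2*(v0-v1) := by
    rw [Qm, ← hC, h2X, h2X]
  rw [hPm, hQm, hC (4*c), hC (8 + 8*c), _root_.map_mul, map_ofNat, map_add,
    _root_.map_mul, map_ofNat, mul_one]
  exact key

lemma psd_trace_nonneg {ι : Type*} [Fintype ι] [DecidableEq ι] {M : Matrix ι ι ℂ}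
    (h : M.PosSemidef) : 0 ≤ M.trace := by
  rw [Matrix.trace]
  apply Finset.sum_nonneg
  intro i _
  have := h.dotProduct_mulVec_nonneg (Pi.single i 1)
  simpa [Matrix.mulVec, dotProduct, Pi.single_apply, Finset.mul_sum] using this

lemma trace_rho_sq_nonneg {ι : Type*} [Fintype ι] [DecidableEq ι]
    {ρ X : Matrix ι ι ℂ} (hρ : ρ.PosSemidef) (hX : X.IsHermitian) :
    0 ≤ (ρ * (X * X)).trace := by
  have h1 : ρ * (X * X) = ρ * X * X := by rw [Matrix.mul_assoc]
  rw [h1, Matrix.trace_mul_comm, ← Matrix.mul_assoc]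
  have h2 : X * ρ * X = X * ρ * Xᴴ := by rw [hX.eq]
  rw [h2]
  exact psd_trace_nonneg (hρ.mul_mul_conjTranspose_same X)

lemma Pm_isHermitian {m n : ℕ} (A : Fin 2 → Matrix (Fin m) (Fin m) ℂ)
    (B : Fin 2 → Matrix (Fin n) (Fin n) ℂ)
    (hA : (A 0).IsHermitian) (hB0 : (B 0).IsHermitian) (hB1 : (B 1).IsHermitian) :
    (Pm A B).IsHermitian := by
  unfold Matrix.IsHermitian Pm
  simp [conjTranspose_sub, conjTranspose_smul, conjTranspose_add, conjTranspose_one,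
    kron_conjTranspose, hA.eq, hB0.eq, hB1.eq, Complex.star_def, Complex.conj_ofReal]

lemma Qm_isHermitian {m n : ℕ} (A : Fin 2 → Matrix (Fin m) (Fin m) ℂ)
    (B : Fin 2 → Matrix (Fin n) (Fin n) ℂ)
    (hA : (A 1).IsHermitian) (hB0 : (B 0).IsHermitian) (hB1 : (B 1).IsHermitian) :
    (Qm A B).IsHermitian := by
  unfold Matrix.IsHermitian Qm
  simp [conjTranspose_sub, conjTranspose_smul, conjTranspose_add, conjTranspose_one,
    kron_conjTranspose, hA.eq, hB0.eq, hB1.eq, Complex.star_def, Complex.conj_ofReal]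

lemma bell_core {m n : ℕ} (ρ : Matrix (Fin m × Fin n) (Fin m × Fin n) ℂ)
    (A : Fin 2 → Matrix (Fin m) (Fin m) ℂ) (B : Fin 2 → Matrix (Fin n) (Fin n) ℂ)
    (htr : ρ.trace = 1) (hA : ∀ x, A x * A x = A x) (hB : ∀ y, B y * B y = B y) :
    4 * Real.sqrt 2 * bellExpr ρ A B
      = 8 + 8 * Real.sqrt 2
        - (Matrix.trace (ρ * (Pm A B * Pm A B))).re
        - (Matrix.trace (ρ * (Qm A B * Qm A B))).re := by
  set T := (kron (A 0) (B 0) + kron (1 - A 0) (1 - B 0))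
       + (kron (A 0) (B 1) + kron (1 - A 0) (1 - B 1))
       + (kron (A 1) (B 0) + kron (1 - A 1) (1 - B 0))
       + (kron (A 1) (1 - B 1) + kron (1 - A 1) (B 1)) with hT
  have hbell : bellExpr ρ A B = (Matrix.trace (ρ * T)).re := by
    rw [hT, bellExpr]
    simp [mul_add, Matrix.trace_add]
  have hid := bell_op_identity A B hA hB
  have hmain : (4 * ((Real.sqrt 2 : ℝ) : ℂ)) * Matrix.trace (ρ * T)
      = (8 + 8 * ((Real.sqrt 2 : ℝ) : ℂ)) - Matrix.trace (ρ * (Pm A B * Pm A B))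
        - Matrix.trace (ρ * (Qm A B * Qm A B)) := by
    have h := congrArg (fun X => Matrix.trace (ρ * X)) hid
    simp only [mul_add, Matrix.trace_add, Matrix.mul_smul, Matrix.trace_smul, smul_eq_mul,
      mul_one, htr] at h
    rw [hT]
    simp only [mul_add, Matrix.trace_add]
    linear_combination h
  rw [hbell]
  have hre := congrArg Complex.re hmain
  simp only [Complex.mul_re, Complex.add_re, Complex.sub_re, Complex.ofReal_re,
    Complex.ofReal_im, Complex.mul_im, Complex.re_ofNat, Complex.im_ofNat] at hre
  ring_nf at hre ⊢
  linarith

noncomputable def sC : ℂ := ((Real.sqrt 2 : ℝ) : ℂ)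

lemma sC_sq : sC * sC = 2 := by
  rw [sC, ← Complex.ofReal_mul, Real.mul_self_sqrt (by norm_num)]
  norm_num

lemma sC_conj : (starRingEnd ℂ) sC = sC := Complex.conj_ofReal _

noncomputable def A0 : Matrix (Fin 2) (Fin 2) ℂ := !![1, 0; 0, 0]
noncomputable def A1 : Matrix (Fin 2) (Fin 2) ℂ := !![1/2, 1/2; 1/2, 1/2]
noncomputable def B0 : Matrix (Fin 2) (Fin 2) ℂ :=
  !![1/2 + sC/4, sC/4; sC/4, 1/2 - sC/4]
noncomputable def B1 : Matrix (Fin 2) (Fin 2) ℂ :=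
  !![1/2 + sC/4, -(sC/4); -(sC/4), 1/2 - sC/4]

lemma A0_proj : A0.IsHermitian ∧ A0 * A0 = A0 := by
  constructor
  · ext i j; fin_cases i <;> fin_cases j <;>
      simp [A0, Matrix.conjTranspose_apply]
  · ext i j; fin_cases i <;> fin_cases j <;>
      simp [A0, Matrix.mul_apply, Fin.sum_univ_two]

lemma A1_proj : A1.IsHermitian ∧ A1 * A1 = A1 := by
  constructor
  · ext i j; fin_cases i <;> fin_cases j <;>
      simp [A1, Matrix.conjTranspose_apply]
  · ext i j; fin_cases i <;> fin_cases j <;>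
      simp [A1, Matrix.mul_apply, Fin.sum_univ_two] <;> norm_num

lemma B0_proj : B0.IsHermitian ∧ B0 * B0 = B0 := by
  constructor
  · ext i j; fin_cases i <;> fin_cases j <;>
      simp [B0, Matrix.conjTranspose_apply, map_add, map_sub, map_div₀, sC_conj]
  · ext i j; fin_cases i <;> fin_cases j <;>
      simp [B0, Matrix.mul_apply, Fin.sum_univ_two] <;>
      first
        | ring1
        | linear_combination (1/8 : ℂ) * sC_sq

lemma B1_proj : B1.IsHermitian ∧ B1 * B1 = B1 := by
  constructor
  · ext i j; fin_cases i <;> fin_cases j <;>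
      simp [B1, Matrix.conjTranspose_apply, map_add, map_sub, map_div₀, sC_conj]
  · ext i j; fin_cases i <;> fin_cases j <;>
      simp [B1, Matrix.mul_apply, Fin.sum_univ_two] <;>
      first
        | ring1
        | linear_combination (1/8 : ℂ) * sC_sq

noncomputable def Vm : Matrix (Fin 1) (Fin 2 × Fin 2) ℂ :=
  fun _ p => if p.1 = p.2 then sC⁻¹ else 0

noncomputable def ρ0 : Matrix (Fin 2 × Fin 2) (Fin 2 × Fin 2) ℂ := Vmᴴ * Vm

noncomputable def Acon : Fin 2 → Matrix (Fin 2) (Fin 2) ℂ := ![A0, A1]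
noncomputable def Bcon : Fin 2 → Matrix (Fin 2) (Fin 2) ℂ := ![B0, B1]

lemma sC_ne : sC ≠ 0 := by
  rw [sC]
  simp [Real.sqrt_eq_zero']

lemma ρ0_psd : ρ0.PosSemidef := Matrix.posSemidef_conjTranspose_mul_self Vm

lemma ρ0_trace : ρ0.trace = 1 := by
  have h2 : sC⁻¹ * sC⁻¹ = 2⁻¹ := by
    rw [← mul_inv, sC_sq]
  simp [ρ0, Matrix.trace, Matrix.mul_apply, Fintype.sum_prod_type, Fin.sum_univ_two,
    Matrix.conjTranspose_apply, Vm, Matrix.diag, Complex.star_def, map_inv₀, sC_conj, h2]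
  try norm_num

lemma V_Pm : Vm * Pm Acon Bcon = 0 := by
  ext i q
  obtain ⟨q1, q2⟩ := q
  have h1 : sC⁻¹ * sC = 1 := inv_mul_cancel₀ sC_ne
  fin_cases i <;> fin_cases q1 <;> fin_cases q2 <;>
    simp [Pm, Vm, Acon, Bcon, A0, A1, B0, B1, kron, Matrix.mul_apply,
      Fintype.sum_prod_type, Fin.sum_univ_two, Matrix.one_apply, Prod.ext_iff,
      (show ((Real.sqrt 2 : ℝ) : ℂ) = sC from rfl)] <;>
    field_simp [sC_ne] <;> right <;> ring1

lemma V_Qm : Vm * Qm Acon Bcon = 0 := by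
  ext i q
  obtain ⟨q1, q2⟩ := q
  have h1 : sC⁻¹ * sC = 1 := inv_mul_cancel₀ sC_ne
  fin_cases i <;> fin_cases q1 <;> fin_cases q2 <;>
    simp [Qm, Vm, Acon, Bcon, A0, A1, B0, B1, kron, Matrix.mul_apply,
      Fintype.sum_prod_type, Fin.sum_univ_two, Matrix.one_apply, Prod.ext_iff,
      (show ((Real.sqrt 2 : ℝ) : ℂ) = sC from rfl)] <;>
    field_simp [sC_ne] <;> ring1

theorem tsirelson_probability_form :
    (∃ (ρ : Matrix (Fin 2 × Fin 2) (Fin 2 × Fin 2) ℂ)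
       (A : Fin 2 → Matrix (Fin 2) (Fin 2) ℂ) (B : Fin 2 → Matrix (Fin 2) (Fin 2) ℂ),
       ρ.PosSemidef ∧ ρ.trace = 1 ∧ (∀ x, IsProjection (A x)) ∧ (∀ y, IsProjection (B y)) ∧
       bellExpr ρ A B = 2 + Real.sqrt 2) ∧
    (∀ (m n : ℕ) (ρ : Matrix (Fin m × Fin n) (Fin m × Fin n) ℂ)
       (A : Fin 2 → Matrix (Fin m) (Fin m) ℂ) (B : Fin 2 → Matrix (Fin n) (Fin n) ℂ),
       ρ.PosSemidef → ρ.trace = 1 → (∀ x, IsProjection (A x)) → (∀ y, IsProjection (B y)) →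
       bellExpr ρ A B ≤ 2 + Real.sqrt 2) := by
  have hs : (0:ℝ) < Real.sqrt 2 := Real.sqrt_pos.mpr (by norm_num)
  have hs2 : Real.sqrt 2 * Real.sqrt 2 = 2 := Real.mul_self_sqrt (by norm_num)
  constructor
  · refine ⟨ρ0, Acon, Bcon, ρ0_psd, ρ0_trace, ?_, ?_, ?_⟩
    · intro x; fin_cases x
      · exact A0_proj
      · exact A1_proj
    · intro y; fin_cases y
      · exact B0_proj
      · exact B1_proj
    · have hA2 : ∀ x, Acon x * Acon x = Acon x := by
        intro x; fin_cases x
        · exact A0_proj.2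
        · exact A1_proj.2
      have hB2 : ∀ y, Bcon y * Bcon y = Bcon y := by
        intro y; fin_cases y
        · exact B0_proj.2
        · exact B1_proj.2
      have core := bell_core ρ0 Acon Bcon ρ0_trace hA2 hB2
      have hP0 : ρ0 * (Pm Acon Bcon * Pm Acon Bcon) = 0 := by
        rw [ρ0, Matrix.mul_assoc, ← Matrix.mul_assoc Vm, V_Pm, Matrix.zero_mul,
          Matrix.mul_zero]
      have hQ0 : ρ0 * (Qm Acon Bcon * Qm Acon Bcon) = 0 := by
        rw [ρ0, Matrix.mul_assoc, ← Matrix.mul_assoc Vm, V_Qm, Matrix.zero_mul,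
          Matrix.mul_zero]
      rw [hP0, hQ0, Matrix.trace_zero] at core
      simp only [Complex.zero_re, sub_zero] at core
      have h4 : (0:ℝ) < 4 * Real.sqrt 2 := by linarith
      have : 4 * Real.sqrt 2 * bellExpr ρ0 Acon Bcon
          = 4 * Real.sqrt 2 * (2 + Real.sqrt 2) := by
        rw [core]; nlinarith
      exact mul_left_cancel₀ (ne_of_gt h4) this
  · intro m n ρ A B hρ htr hA hB
    have core := bell_core ρ A B htr (fun x => (hA x).2) (fun y => (hB y).2)
    have h1 := trace_rho_sq_nonneg hρ (Pm_isHermitian A B (hA 0).1 (hB 0).1 (hB 1).1)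
    have h2 := trace_rho_sq_nonneg hρ (Qm_isHermitian A B (hA 1).1 (hB 0).1 (hB 1).1)
    have h1re : 0 ≤ (Matrix.trace (ρ * (Pm A B * Pm A B))).re := by
      have := (Complex.le_def.mp h1).1; simpa using this
    have h2re : 0 ≤ (Matrix.trace (ρ * (Qm A B * Qm A B))).re := by
      have := (Complex.le_def.mp h2).1; simpa using this
    have h4 : (0:ℝ) < 4 * Real.sqrt 2 := by linarith
    have hle : 4 * Real.sqrt 2 * bellExpr ρ A B ≤ 4 * Real.sqrt 2 * (2 + Real.sqrt 2) := by
      rw [core]; nlinarith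
    exact le_of_mul_le_mul_left hle h4
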